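/- arXiv:2105.03993 — 5 statements merged into one kernel-verified Lean document; each statement's English description precedes it below -/
import Mathlib

section
/- Let Ω be a measurable space, μ a probability measure on Ω, and κ a Markov kernel from Ω to ℝ such that for μ-almost every ω the measure κ(ω) has no atoms. Define the one-sided prior-predictive replication p-value as the map p(ω, t) = κ(ω)([t, ∞)) on Ω × ℝ. Then the pushforward of the composition measure μ ⊗ κ (the joint law of (ω, t) with ω ~ μ and t ~ κ(ω)) under p is the uniform (Lebesgue) probability measure on the interval [0, 1]. (Proposition 1: prior-predictive replication p-values are uniformly distributed on [0,1] under the assumed reference reproducible model.) -/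
open MeasureTheory ProbabilityTheory Set Filter Topology
open scoped ProbabilityTheory

lemma survival_map_uniform (ν : Measure ℝ) [IsProbabilityMeasure ν]
    (h : ∀ t : ℝ, ν {t} = 0) :
    ν.map (fun t => (ν (Set.Ici t)).toReal) = volume.restrict (Set.Icc (0 : ℝ) 1) := by
  set S : ℝ → ℝ := fun t => (ν (Set.Ici t)).toReal with hSdef
  have hanti : Antitone S := fun a b hab =>
    ENNReal.toReal_mono (measure_ne_top ν _) (measure_mono (Set.Ici_subset_Ici.2 hab))
  have hmeas : Measurable S := hanti.measurable
  have hS0 : ∀ t, 0 ≤ S t := fun t => ENNReal.toReal_nonneg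
  have hSle : ∀ t, S t ≤ 1 := by
    intro t
    have : ν (Set.Ici t) ≤ 1 := prob_le_one
    simpa using ENNReal.toReal_mono ENNReal.one_ne_top this
  -- cdf continuity
  have hcdf_cont : Continuous (cdf ν) := by
    rw [continuous_iff_continuousAt]
    intro x
    have h1 : (cdf ν).measure {x} = 0 := by rw [measure_cdf]; exact h x
    rw [StieltjesFunction.measure_singleton] at h1
    have h1' : cdf ν x - Function.leftLim (cdf ν) x ≤ 0 := by
      simpa [ENNReal.ofReal_eq_zero] using h1
    have h2 : Function.leftLim (cdf ν) x = cdf ν x :=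
      le_antisymm ((monotone_cdf (μ := ν)).leftLim_le le_rfl) (by linarith)
    exact (monotone_cdf (μ := ν)).continuousAt_iff_leftLim_eq_rightLim.2
      (h2.trans ((cdf ν).rightLim_eq x).symm)
  have hSeq : ∀ t, S t = 1 - cdf ν t := by
    intro t
    have hIio : ν (Set.Iio t) = ν (Set.Iic t) := by
      have : ν (Set.Iic t) = ν (Set.Iio t) + ν {t} := by
        rw [← Set.Iio_union_right, measure_union (by simp) (measurableSet_singleton t)]
      simp [this, h t]
    have hcompl : ν (Set.Ici t) = 1 - ν (Set.Iio t) := by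
      rw [← Set.compl_Iio, measure_compl measurableSet_Iio (measure_ne_top ν _), measure_univ]
    rw [hSdef]
    simp only
    rw [cdf_eq_real, measureReal_def, hcompl, hIio,
      ENNReal.toReal_sub_of_le prob_le_one ENNReal.one_ne_top, ENNReal.toReal_one]
  have hScont : Continuous S := by
    have : S = fun t => 1 - cdf ν t := funext hSeq
    rw [this]
    exact continuous_const.sub hcdf_cont
  have htop : Tendsto S atTop (𝓝 0) := by
    have : Tendsto (fun t => 1 - cdf ν t) atTop (𝓝 (1 - 1)) :=
      tendsto_const_nhds.sub (tendsto_cdf_atTop ν)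
    simpa [funext hSeq] using this
  have hbot : Tendsto S atBot (𝓝 1) := by
    have : Tendsto (fun t => 1 - cdf ν t) atBot (𝓝 (1 - 0)) :=
      tendsto_const_nhds.sub (tendsto_cdf_atBot ν)
    simpa [funext hSeq] using this
  have hprob : IsProbabilityMeasure (ν.map S) := Measure.isProbabilityMeasure_map hmeas.aemeasurable
  refine MeasureTheory.Measure.ext_of_Iic (ν.map S) _ (fun x => ?_)
  rw [Measure.map_apply hmeas measurableSet_Iic,
    Measure.restrict_apply measurableSet_Iic]
  rcases lt_or_ge x 0 with hx | hx
  · have h1 : S ⁻¹' Set.Iic x = ∅ := by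
      ext t; simp only [Set.mem_preimage, Set.mem_Iic, Set.mem_empty_iff_false, iff_false, not_le]
      exact lt_of_lt_of_le hx (hS0 t)
    have h2 : Set.Iic x ∩ Set.Icc (0:ℝ) 1 = ∅ := by
      ext t; simp only [Set.mem_inter_iff, Set.mem_Iic, Set.mem_Icc, Set.mem_empty_iff_false,
        iff_false]
      rintro ⟨h1', h2', -⟩; linarith
    rw [h1, h2]
    simp
  rcases le_or_gt 1 x with hx1 | hx1
  · have h1 : S ⁻¹' Set.Iic x = Set.univ := by
      ext t; simp only [Set.mem_preimage, Set.mem_Iic, Set.mem_univ, iff_true]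
      exact le_trans (hSle t) hx1
    have h2 : Set.Iic x ∩ Set.Icc (0:ℝ) 1 = Set.Icc 0 1 := by
      rw [Set.inter_eq_right]
      intro t ht; exact le_trans ht.2 hx1
    rw [h1, h2, measure_univ, Real.volume_Icc]
    norm_num
  -- main case 0 ≤ x < 1
  · have h2 : Set.Iic x ∩ Set.Icc (0:ℝ) 1 = Set.Icc 0 x := by
      ext t
      simp only [Set.mem_inter_iff, Set.mem_Iic, Set.mem_Icc]
      constructor
      · rintro ⟨ht, ht0, -⟩; exact ⟨ht0, ht⟩
      · rintro ⟨ht0, ht⟩; exact ⟨ht, ht0, le_trans ht hx1.le⟩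
    rw [h2, Real.volume_Icc]
    set A := S ⁻¹' Set.Iic x with hA
    rcases A.eq_empty_or_nonempty with hne | hne
    · have hx0 : x = 0 := by
        by_contra hx0
        have hxpos : 0 < x := lt_of_le_of_ne hx (Ne.symm hx0)
        obtain ⟨t, ht⟩ := (htop.eventually_lt_const hxpos).exists
        have hmem : t ∈ A := ht.le
        rw [hne] at hmem
        exact hmem
      simp [hne, hx0]
    · obtain ⟨t0, ht0⟩ := (hbot.eventually_const_lt hx1).exists
      have hbdd : BddBelow A := by
        refine ⟨t0, fun t ht => ?_⟩
        by_contra hcon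
        push_neg at hcon
        exact absurd (le_trans (hanti hcon.le) ht) (not_le.2 ht0)
      have hclosed : IsClosed A := IsClosed.preimage hScont isClosed_Iic
      set a := sInf A with ha
      have haA : a ∈ A := hclosed.csInf_mem hne hbdd
      have hAeq : A = Set.Ici a := by
        apply subset_antisymm
        · exact fun t ht => csInf_le hbdd ht
        · exact fun t ht => le_trans (hanti ht) haA
      have hSa : S a = x := by
        refine le_antisymm haA ?_
        by_contra hcon
        push_neg at hcon
        have hev : ∀ᶠ t in 𝓝[<] a, S t < x :=
          ((hScont.tendsto a).eventually_lt_const hcon).filter_mono nhdsWithin_le_nhds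
        obtain ⟨t, htlt, hta⟩ := (hev.and eventually_mem_nhdsWithin).exists
        have h1 : t ∈ A := le_of_lt htlt
        exact absurd (csInf_le hbdd h1) (not_le.2 hta)
      have : ν A = ENNReal.ofReal x := by
        rw [hAeq, ← hSa, hSdef]
        simp only
        rw [ENNReal.ofReal_toReal (measure_ne_top ν _)]
      rw [this]
      simp

/-- **Proposition 1 (one-sided).** If `μ` is a probability measure on `Ω` and `κ` a Markov
kernel from `Ω` to `ℝ` such that `κ ω` has no atoms for `μ`-almost every `ω`, then the
one-sided prior-predictive replication p-value `p (ω, t) = κ ω [t, ∞)`, viewed as a map on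
`Ω × ℝ` equipped with the composition measure `μ ⊗ₘ κ`, is uniformly distributed on `[0, 1]`. -/
theorem prior_prp_one_sided_uniform {Ω : Type*} [MeasurableSpace Ω]
    (μ : Measure Ω) [IsProbabilityMeasure μ]
    (κ : Kernel Ω ℝ) [IsMarkovKernel κ]
    (hNoAtoms : ∀ᵐ ω ∂μ, ∀ t : ℝ, κ ω {t} = 0) :
    (μ ⊗ₘ κ).map (fun p : Ω × ℝ => ((κ p.1) (Set.Ici p.2)).toReal)
      = volume.restrict (Set.Icc (0 : ℝ) 1) := by
  have hker : Measurable (fun p : Ω × ℝ => (κ p.1) (Set.Ici p.2)) := by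
    have hs : MeasurableSet {q : (Ω × ℝ) × ℝ | q.1.2 ≤ q.2} :=
      measurableSet_le measurable_fst.snd measurable_snd
    have hm := Kernel.measurable_kernel_prodMk_left
      (κ := κ.comap Prod.fst measurable_fst) hs
    have heq : (fun p : Ω × ℝ => (κ p.1) (Set.Ici p.2))
        = fun a : Ω × ℝ => ((κ.comap Prod.fst measurable_fst : Kernel (Ω × ℝ) ℝ)) a
          (Prod.mk a ⁻¹' {q : (Ω × ℝ) × ℝ | q.1.2 ≤ q.2}) := by
      funext p
      rw [Kernel.comap_apply]
      rfl
    rw [heq]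
    exact hm
  have hf : Measurable (fun p : Ω × ℝ => ((κ p.1) (Set.Ici p.2)).toReal) :=
    hker.ennreal_toReal
  refine Measure.ext fun s hs => ?_
  rw [Measure.map_apply hf hs, Measure.compProd_apply (hf hs)]
  have hae : ∀ᵐ ω ∂μ,
      κ ω (Prod.mk ω ⁻¹' ((fun p : Ω × ℝ => ((κ p.1) (Set.Ici p.2)).toReal) ⁻¹' s))
        = (volume.restrict (Set.Icc (0 : ℝ) 1)) s := by
    filter_upwards [hNoAtoms] with ω hω
    have hanti : Antitone (fun t : ℝ => ((κ ω) (Set.Ici t)).toReal) := fun a b hab =>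
      ENNReal.toReal_mono (measure_ne_top _ _) (measure_mono (Set.Ici_subset_Ici.2 hab))
    have hpre : Prod.mk ω ⁻¹' ((fun p : Ω × ℝ => ((κ p.1) (Set.Ici p.2)).toReal) ⁻¹' s)
        = (fun t : ℝ => ((κ ω) (Set.Ici t)).toReal) ⁻¹' s := rfl
    rw [hpre, ← Measure.map_apply hanti.measurable hs, survival_map_uniform (κ ω) hω]
  rw [lintegral_congr_ae hae, lintegral_const, measure_univ, mul_one]
end

section
/- Let Ω be a measurable space, μ a probability measure on Ω, and κ a Markov kernel from Ω to ℝ such that for μ-almost every ω the measure κ(ω) has no atoms. Define the two-sided prior-predictive replication p-value as the map p₂(ω, t) = 2 · min{κ(ω)((-∞, t]), κ(ω)([t, ∞))} on Ω × ℝ. Then the pushforward of the composition measure μ ⊗ κ under p₂ is the uniform (Lebesgue) probability measure on the interval [0, 1]. (Two-sided version of Proposition 1.) -/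
open MeasureTheory ProbabilityTheory Set Filter
open scoped ProbabilityTheory ENNReal Topology

section Helpers

variable (ν : Measure ℝ) [IsProbabilityMeasure ν]

lemma myContinuous_cdf (hν : ∀ t : ℝ, ν {t} = 0) : Continuous (cdf ν) := by
  rw [continuous_iff_continuousAt]
  intro x
  rw [(monotone_cdf ν).continuousAt_iff_leftLim_eq_rightLim]
  have hright : Function.rightLim (cdf ν) x = cdf ν x :=
    (monotone_cdf ν).continuousWithinAt_Ioi_iff_rightLim_eq.1
      (((cdf ν).right_continuous x).mono Ioi_subset_Ici_self)
  have hsing : (cdf ν).measure {x} = 0 := by rw [measure_cdf]; exact hν x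
  rw [StieltjesFunction.measure_singleton] at hsing
  have hle : Function.leftLim (cdf ν) x ≤ cdf ν x := (monotone_cdf ν).leftLim_le le_rfl
  have : cdf ν x - Function.leftLim (cdf ν) x ≤ 0 := by
    by_contra h
    push_neg at h
    rw [ENNReal.ofReal_eq_zero] at hsing
    linarith
  rw [hright]
  linarith

lemma level_le (hν : ∀ t : ℝ, ν {t} = 0) {a : ℝ} (ha0 : 0 ≤ a) (ha1 : a < 1) :
    ν {t | cdf ν t ≤ a} = ENNReal.ofReal a := by
  have hcont := myContinuous_cdf ν hν
  set A : Set ℝ := {t | cdf ν t ≤ a} with hA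
  have hAclosed : IsClosed A := isClosed_Iic.preimage hcont
  -- A is bounded above
  have hbdd : BddAbove A := by
    obtain ⟨t₀, ht₀⟩ := (tendsto_cdf_atTop ν).eventually_const_lt ha1 |>.exists_forall_of_atTop
    exact ⟨t₀, fun t ht => by
      by_contra h
      push_neg at h
      exact absurd (ht₀ t h.le) (not_lt.2 ht)⟩
  rcases A.eq_empty_or_nonempty with hAe | hAne
  · have ha0' : a ≤ 0 := by
      by_contra h
      push_neg at h
      obtain ⟨t, ht⟩ := ((tendsto_cdf_atBot ν).eventually_lt_const h).exists
      have hmem : t ∈ A := ht.le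
      rw [hAe] at hmem
      exact hmem
    rw [hAe, measure_empty, ENNReal.ofReal_eq_zero.2 ha0']
  · set c := sSup A with hc
    have hcA : c ∈ A := hAclosed.csSup_mem hAne hbdd
    have hFc : cdf ν c = a := by
      refine le_antisymm hcA ?_
      by_contra h
      push_neg at h
      have htend : Tendsto (cdf ν) (𝓝[>] c) (𝓝 (cdf ν c)) :=
        (hcont.continuousAt.continuousWithinAt).tendsto
      have hev : ∀ᶠ y in 𝓝[>] c, cdf ν y < a := htend.eventually_lt_const h
      obtain ⟨y, hy1, hy2⟩ := (hev.and self_mem_nhdsWithin).exists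
      exact absurd (le_csSup hbdd (hy1.le : y ∈ A)) (not_le.2 hy2)
    have hAIic : A = Iic c := by
      ext t
      constructor
      · exact fun ht => le_csSup hbdd ht
      · intro ht
        rcases eq_or_lt_of_le (mem_Iic.1 ht) with rfl | hlt
        · exact hcA
        · obtain ⟨s, hsA, hts⟩ := exists_lt_of_lt_csSup hAne hlt
          exact le_trans (monotone_cdf ν hts.le) hsA
    rw [hAIic, ← ofReal_cdf, hFc]

lemma level_ge (hν : ∀ t : ℝ, ν {t} = 0) {b : ℝ} (hb0 : 0 < b) (hb1 : b ≤ 1) :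
    ν {t | b ≤ cdf ν t} = ENNReal.ofReal (1 - b) := by
  have hcont := myContinuous_cdf ν hν
  set B : Set ℝ := {t | b ≤ cdf ν t} with hB
  have hBclosed : IsClosed B := isClosed_Ici.preimage hcont
  have hbdd : BddBelow B := by
    obtain ⟨t₀, ht₀⟩ := ((tendsto_cdf_atBot ν).eventually_lt_const hb0).exists_forall_of_atBot
    exact ⟨t₀, fun t ht => by
      by_contra h
      push_neg at h
      exact absurd (ht₀ t h.le) (not_lt.2 ht)⟩
  rcases B.eq_empty_or_nonempty with hBe | hBne
  · have hb1' : 1 ≤ b := by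
      by_contra h
      push_neg at h
      obtain ⟨t, ht⟩ := ((tendsto_cdf_atTop ν).eventually_const_lt h).exists
      have hmem : t ∈ B := ht.le
      rw [hBe] at hmem
      exact hmem
    rw [hBe, measure_empty, ENNReal.ofReal_eq_zero.2 (by linarith)]
  · set c := sInf B with hc
    have hcB : c ∈ B := hBclosed.csInf_mem hBne hbdd
    have hFc : cdf ν c = b := by
      refine le_antisymm ?_ hcB
      by_contra h
      push_neg at h
      have htend : Tendsto (cdf ν) (𝓝[<] c) (𝓝 (cdf ν c)) :=
        (hcont.continuousAt.continuousWithinAt).tendsto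
      have hev : ∀ᶠ y in 𝓝[<] c, b < cdf ν y := htend.eventually_const_lt h
      obtain ⟨y, hy1, hy2⟩ := (hev.and self_mem_nhdsWithin).exists
      exact absurd (csInf_le hbdd (hy1.le : y ∈ B)) (not_le.2 hy2)
    have hBIci : B = Ici c := by
      ext t
      constructor
      · exact fun ht => csInf_le hbdd ht
      · intro ht
        rcases eq_or_lt_of_le (mem_Ici.1 ht) with heq | hlt
        · exact heq ▸ hcB
        · obtain ⟨s, hsB, hts⟩ := exists_lt_of_csInf_lt hBne hlt
          exact le_trans hsB (monotone_cdf ν hts.le)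
    have : NoAtoms ν := ⟨hν⟩
    have hIio : ν (Iio c) = ν (Iic c) := measure_congr (Iio_ae_eq_Iic' (hν c))
    rw [hBIci, ← Set.compl_Iio, prob_compl_eq_one_sub measurableSet_Iio, hIio,
      ← ofReal_cdf, hFc, ← ENNReal.ofReal_one, ← ENNReal.ofReal_sub _ (le_of_lt hb0)]

lemma hIci_toReal (hν : ∀ t : ℝ, ν {t} = 0) (t : ℝ) :
    (ν (Ici t)).toReal = 1 - cdf ν t := by
  have : NoAtoms ν := ⟨hν⟩
  have h1 : ν (Ici t) = ν (Ioi t) := (measure_congr (Ioi_ae_eq_Ici' (hν t))).symm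
  rw [h1, ← Set.compl_Iic, prob_compl_eq_one_sub measurableSet_Iic, ← ofReal_cdf,
    ← ENNReal.ofReal_one, ← ENNReal.ofReal_sub _ (cdf_nonneg ν t),
    ENNReal.toReal_ofReal (by linarith [cdf_le_one ν t])]

lemma key_lemma (hν : ∀ t : ℝ, ν {t} = 0) {x : ℝ} (hx0 : 0 ≤ x) (hx1 : x < 1) :
    ν {t | 2 * min ((ν (Iic t)).toReal) ((ν (Ici t)).toReal) ≤ x} = ENNReal.ofReal x := by
  have hcont := myContinuous_cdf ν hν
  have hset : {t | 2 * min ((ν (Iic t)).toReal) ((ν (Ici t)).toReal) ≤ x}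
      = {t | cdf ν t ≤ x / 2} ∪ {t | 1 - x / 2 ≤ cdf ν t} := by
    ext t
    rw [mem_setOf_eq, ← measureReal_def, ← cdf_eq_real, hIci_toReal ν hν]
    constructor
    · intro h
      rcases le_total (cdf ν t) (1 - cdf ν t) with hm | hm
      · left; rw [min_eq_left hm] at h; simpa [mem_setOf_eq] using by linarith
      · right; rw [min_eq_right hm] at h; simpa [mem_setOf_eq] using by linarith
    · rintro (h | h) <;> simp only [mem_setOf_eq] at h
      · calc 2 * min (cdf ν t) (1 - cdf ν t) ≤ 2 * cdf ν t := by
              have := min_le_left (cdf ν t) (1 - cdf ν t); linarith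
          _ ≤ x := by linarith
      · calc 2 * min (cdf ν t) (1 - cdf ν t) ≤ 2 * (1 - cdf ν t) := by
              have := min_le_right (cdf ν t) (1 - cdf ν t); linarith
          _ ≤ x := by linarith
  have hdisj : Disjoint {t | cdf ν t ≤ x / 2} {t | 1 - x / 2 ≤ cdf ν t} := by
    rw [Set.disjoint_left]
    intro t h1 h2
    simp only [mem_setOf_eq] at h1 h2
    linarith
  have hBmeas : MeasurableSet {t | 1 - x / 2 ≤ cdf ν t} :=
    (isClosed_Ici.preimage hcont).measurableSet
  rw [hset, measure_union hdisj hBmeas,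
    level_le ν hν (by linarith) (by linarith),
    level_ge ν hν (by linarith) (by linarith),
    ← ENNReal.ofReal_add (by linarith) (by linarith)]
  ring_nf

lemma key_top (hν : ∀ t : ℝ, ν {t} = 0) (t : ℝ) :
    2 * min ((ν (Iic t)).toReal) ((ν (Ici t)).toReal) ≤ 1 := by
  rw [← measureReal_def, ← cdf_eq_real, hIci_toReal ν hν]
  rcases le_total (cdf ν t) (1 - cdf ν t) with hm | hm
  · rw [min_eq_left hm]; linarith
  · rw [min_eq_right hm]; linarith

end Helpers


/-- **Proposition 1 (two-sided).** If `μ` is a probability measure on `Ω` and `κ` a Markov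
kernel from `Ω` to `ℝ` such that `κ ω` has no atoms for `μ`-almost every `ω`, then the
two-sided prior-predictive replication p-value
`p₂ (ω, t) = 2 * min (κ ω (-∞, t]) (κ ω [t, ∞))`, viewed as a map on `Ω × ℝ` equipped with
the composition measure `μ ⊗ₘ κ`, is uniformly distributed on `[0, 1]`. -/
theorem prior_prp_two_sided_uniform {Ω : Type*} [MeasurableSpace Ω]
    (μ : Measure Ω) [IsProbabilityMeasure μ]
    (κ : Kernel Ω ℝ) [IsMarkovKernel κ]
    (hNoAtoms : ∀ᵐ ω ∂μ, ∀ t : ℝ, κ ω {t} = 0) :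
    (μ ⊗ₘ κ).map
        (fun p : Ω × ℝ =>
          2 * min ((κ p.1) (Set.Iic p.2)).toReal ((κ p.1) (Set.Ici p.2)).toReal)
      = volume.restrict (Set.Icc (0 : ℝ) 1) := by
  set f : Ω × ℝ → ℝ := fun p =>
    2 * min ((κ p.1) (Set.Iic p.2)).toReal ((κ p.1) (Set.Ici p.2)).toReal with hf
  -- measurability
  have hmIic : Measurable fun p : Ω × ℝ => κ p.1 (Set.Iic p.2) := by
    have hs : MeasurableSet {q : (Ω × ℝ) × ℝ | q.2 ≤ q.1.2} :=
      measurableSet_le measurable_snd measurable_fst.snd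
    have := Kernel.measurable_kernel_prodMk_left
      (κ := κ.comap (Prod.fst : Ω × ℝ → Ω) measurable_fst) hs
    simpa [Kernel.comap_apply, Set.Iic] using this
  have hmIci : Measurable fun p : Ω × ℝ => κ p.1 (Set.Ici p.2) := by
    have hs : MeasurableSet {q : (Ω × ℝ) × ℝ | q.1.2 ≤ q.2} :=
      measurableSet_le measurable_fst.snd measurable_snd
    have := Kernel.measurable_kernel_prodMk_left
      (κ := κ.comap (Prod.fst : Ω × ℝ → Ω) measurable_fst) hs
    simpa [Kernel.comap_apply, Set.Ici] using this
  have hfm : Measurable f :=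
    (measurable_const.mul (hmIic.ennreal_toReal.min hmIci.ennreal_toReal))
  have hf_nonneg : ∀ p, 0 ≤ f p := fun p => by
    have h1 : (0:ℝ) ≤ min ((κ p.1) (Set.Iic p.2)).toReal ((κ p.1) (Set.Ici p.2)).toReal :=
      le_min ENNReal.toReal_nonneg ENNReal.toReal_nonneg
    simp only [hf]; linarith
  haveI : IsProbabilityMeasure ((μ ⊗ₘ κ).map f) := Measure.isProbabilityMeasure_map hfm.aemeasurable
  refine Measure.ext_of_Iic _ _ (fun x => ?_)
  rw [Measure.map_apply hfm measurableSet_Iic,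
    Measure.compProd_apply (hfm measurableSet_Iic),
    Measure.restrict_apply measurableSet_Iic]
  have hpre : ∀ ω : Ω, (Prod.mk ω ⁻¹' (f ⁻¹' Set.Iic x))
      = {t : ℝ | 2 * min ((κ ω) (Set.Iic t)).toReal ((κ ω) (Set.Ici t)).toReal ≤ x} := by
    intro ω; rfl
  rcases lt_or_ge x 0 with hx | hx0
  · have hL : ∀ ω : Ω, κ ω (Prod.mk ω ⁻¹' (f ⁻¹' Set.Iic x)) = 0 := by
      intro ω
      rw [hpre]
      convert measure_empty (μ := κ ω)
      ext t
      simp only [Set.mem_setOf_eq, Set.mem_empty_iff_false, iff_false, not_le]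
      have := hf_nonneg (ω, t)
      simp only [hf] at this
      linarith
    simp only [hL, lintegral_zero]
    have : Set.Iic x ∩ Set.Icc (0:ℝ) 1 = ∅ := by
      ext t; simp only [Set.mem_inter_iff, Set.mem_Iic, Set.mem_Icc,
        Set.mem_empty_iff_false, iff_false]
      rintro ⟨h1, h2, h3⟩; linarith
    rw [this, measure_empty]
  rcases lt_or_ge x 1 with hx1 | hx1
  · have hL : ∀ᵐ ω ∂μ, κ ω (Prod.mk ω ⁻¹' (f ⁻¹' Set.Iic x)) = ENNReal.ofReal x := by
      filter_upwards [hNoAtoms] with ω hω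
      rw [hpre]
      exact key_lemma (κ ω) hω hx0 hx1
    rw [lintegral_congr_ae hL, lintegral_const, measure_univ, mul_one]
    have : Set.Iic x ∩ Set.Icc (0:ℝ) 1 = Set.Icc 0 x := by
      ext t; simp only [Set.mem_inter_iff, Set.mem_Iic, Set.mem_Icc]
      constructor
      · rintro ⟨h1, h2, h3⟩; exact ⟨h2, h1⟩
      · rintro ⟨h1, h2⟩; exact ⟨h2, h1, by linarith⟩
    rw [this, Real.volume_Icc, sub_zero]
  · have hL : ∀ᵐ ω ∂μ, κ ω (Prod.mk ω ⁻¹' (f ⁻¹' Set.Iic x)) = 1 := by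
      filter_upwards [hNoAtoms] with ω hω
      rw [hpre]
      have : {t : ℝ | 2 * min ((κ ω) (Set.Iic t)).toReal ((κ ω) (Set.Ici t)).toReal ≤ x}
          = Set.univ := by
        ext t
        simp only [Set.mem_setOf_eq, Set.mem_univ, iff_true]
        exact le_trans (key_top (κ ω) hω t) hx1
      rw [this, measure_univ]
    rw [lintegral_congr_ae hL, lintegral_one, measure_univ]
    have : Set.Iic x ∩ Set.Icc (0:ℝ) 1 = Set.Icc 0 1 := by
      rw [Set.inter_eq_right]
      intro t ht
      exact le_trans ht.2 hx1
    rw [this, Real.volume_Icc, sub_zero, ENNReal.ofReal_one]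
end

section
/- Let ν be a probability measure on ℝ whose cumulative distribution function F_ν(t) = ν((-∞, t]) is continuous and strictly increasing on ℝ, and let q_ν(β) = sInf {t : F_ν(t) ≥ β} denote its β-quantile for β ∈ (0, 1). Then for every α ∈ (0, 1) and every t ∈ ℝ: t does not lie in the open interval (q_ν(α/2), q_ν(1 − α/2)) if and only if 2 · min{F_ν(t), 1 − F_ν(t)} ≤ α. (Proposition 2: the replication statistic falls outside the central (1−α) predictive interval iff the corresponding two-sided prior-predictive replication p-value is at most α.) -/
open MeasureTheory Filter Topology

lemma quantile_eq (ν : Measure ℝ) [IsProbabilityMeasure ν]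
    (hcont : Continuous fun t : ℝ => (ν (Set.Iic t)).toReal)
    (hmono : StrictMono fun t : ℝ => (ν (Set.Iic t)).toReal)
    {β : ℝ} (hβ0 : 0 < β) (hβ1 : β < 1) :
    ∃ q : ℝ, (ν (Set.Iic q)).toReal = β ∧
      sInf {s : ℝ | β ≤ (ν (Set.Iic s)).toReal} = q := by
  set F : ℝ → ℝ := fun t : ℝ => (ν (Set.Iic t)).toReal with hF
  have hFc : F = ProbabilityTheory.cdf ν := by
    funext x; rw [ProbabilityTheory.cdf_eq_real]; rfl
  have htop : Tendsto F atTop (𝓝 1) := by rw [hFc]; exact ProbabilityTheory.tendsto_cdf_atTop ν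
  have hbot : Tendsto F atBot (𝓝 0) := by rw [hFc]; exact ProbabilityTheory.tendsto_cdf_atBot ν
  obtain ⟨a, ha⟩ := (hbot.eventually (eventually_lt_nhds hβ0)).exists
  obtain ⟨b, hb⟩ := (htop.eventually (eventually_gt_nhds hβ1)).exists
  have hab : a ≤ b := by
    by_contra h
    exact absurd (hmono (lt_of_not_ge h)) (by linarith)
  obtain ⟨q, hq, hqβ⟩ := intermediate_value_Icc hab hcont.continuousOn
    (Set.mem_Icc.mpr ⟨ha.le, hb.le⟩)
  refine ⟨q, hqβ, ?_⟩
  have : {s : ℝ | β ≤ F s} = Set.Ici q := by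
    ext s
    simp only [Set.mem_setOf_eq, Set.mem_Ici, ← hqβ]
    exact ⟨fun h => hmono.le_iff_le.mp h, fun h => hmono.le_iff_le.mpr h⟩
  rw [this, csInf_Ici]


/-- **Proposition 2.** Let `ν` be a probability measure on `ℝ` with continuous and strictly
increasing CDF `F ν t = ν (-∞, t]`, and let `q β = sInf {t | F ν t ≥ β}` be its `β`-quantile.
Then for every `α ∈ (0,1)` and every `t : ℝ`, the observation `t` lies outside the central
`(1 - α)` predictive interval `(q (α/2), q (1 - α/2))` if and only if the two-sided p-value
`2 * min (F ν t) (1 - F ν t)` is at most `α`. -/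
theorem interval_check_iff_two_sided_prp (ν : Measure ℝ) [IsProbabilityMeasure ν]
    (hcont : Continuous fun t : ℝ => (ν (Set.Iic t)).toReal)
    (hmono : StrictMono fun t : ℝ => (ν (Set.Iic t)).toReal)
    (α : ℝ) (hα : α ∈ Set.Ioo (0 : ℝ) 1) (t : ℝ) :
    t ∉ Set.Ioo (sInf {s : ℝ | α / 2 ≤ (ν (Set.Iic s)).toReal})
        (sInf {s : ℝ | 1 - α / 2 ≤ (ν (Set.Iic s)).toReal})
      ↔ 2 * min ((ν (Set.Iic t)).toReal) (1 - (ν (Set.Iic t)).toReal) ≤ α := by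
  obtain ⟨hα0, hα1⟩ := hα
  obtain ⟨q1, hq1, he1⟩ := quantile_eq ν hcont hmono (by linarith : (0:ℝ) < α/2) (by linarith)
  obtain ⟨q2, hq2, he2⟩ := quantile_eq ν hcont hmono (by linarith : (0:ℝ) < 1 - α/2) (by linarith)
  rw [he1, he2]
  set F : ℝ → ℝ := fun t : ℝ => (ν (Set.Iic t)).toReal with hF
  have h1 : q1 < t ↔ α/2 < F t := by rw [← hq1]; exact ⟨fun h => hmono h, fun h => hmono.lt_iff_lt.mp h⟩
  have h2 : t < q2 ↔ F t < 1 - α/2 := by rw [← hq2]; exact ⟨fun h => hmono h, fun h => hmono.lt_iff_lt.mp h⟩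
  constructor
  · intro h
    rw [Set.mem_Ioo, not_and_or, not_lt, not_lt] at h
    rcases h with h | h
    · have : F t ≤ α/2 := hq1 ▸ hmono.le_iff_le.mpr h
      calc 2 * min (F t) (1 - F t) ≤ 2 * F t := by
            exact mul_le_mul_of_nonneg_left (min_le_left _ _) (by norm_num)
        _ ≤ α := by linarith
    · have : 1 - α/2 ≤ F t := hq2 ▸ hmono.le_iff_le.mpr h
      calc 2 * min (F t) (1 - F t) ≤ 2 * (1 - F t) := by
            exact mul_le_mul_of_nonneg_left (min_le_right _ _) (by norm_num)
        _ ≤ α := by linarith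
  · intro h hmem
    obtain ⟨ht1, ht2⟩ := hmem
    have hlt1 : α/2 < F t := h1.mp ht1
    have hlt2 : F t < 1 - α/2 := h2.mp ht2
    rcases min_cases (F t) (1 - F t) with ⟨hm, _⟩ | ⟨hm, _⟩ <;> rw [hm] at h <;> linarith
end

section
/- Let Ω be a measurable space, μ a probability measure on Ω, and κ a Markov kernel from Ω to ℝ such that for μ-almost every ω the cumulative distribution function of κ(ω) is continuous and strictly increasing on ℝ. For β ∈ (0,1) write q_ω(β) = sInf {t : κ(ω)((-∞, t]) ≥ β}. Then for every α ∈ (0, 1), the composition measure μ ⊗ κ assigns probability exactly α to the set {(ω, t) : t ∉ (q_ω(α/2), q_ω(1 − α/2))}; i.e., under the reference reproducible model the replication statistic falls outside the central (1−α) predictive interval with probability exactly α. (Corollary of Propositions 1 and 2.) -/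
open MeasureTheory ProbabilityTheory Filter Topology
open scoped ProbabilityTheory

private lemma cdf_mono (ν : Measure ℝ) [IsFiniteMeasure ν] :
    Monotone (fun t : ℝ => (ν (Set.Iic t)).toReal) := fun s t hst =>
  ENNReal.toReal_mono (measure_ne_top _ _) (measure_mono (Set.Iic_subset_Iic.2 hst))

private lemma measurable_quantile {Ω : Type*} [MeasurableSpace Ω] (κ : Kernel Ω ℝ)
    [IsMarkovKernel κ] (β : ℝ) :
    Measurable (fun ω => sInf {s : ℝ | β ≤ ((κ ω) (Set.Iic s)).toReal}) := by
  apply measurable_of_Iio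
  intro t
  have hFm : ∀ ω, Monotone fun s : ℝ => ((κ ω) (Set.Iic s)).toReal := fun ω => cdf_mono (κ ω)
  have hmeas : ∀ s : ℝ, Measurable fun ω => ((κ ω) (Set.Iic s)).toReal :=
    fun s => (κ.measurable_coe measurableSet_Iic).ennreal_toReal
  have hEq : (fun ω => sInf {s : ℝ | β ≤ ((κ ω) (Set.Iic s)).toReal}) ⁻¹' (Set.Iio t)
      = ({ω | (∀ r : ℚ, ((κ ω) (Set.Iic (r:ℝ))).toReal < β) ∨
              (∀ r : ℚ, β ≤ ((κ ω) (Set.Iic (r:ℝ))).toReal)} ∩ {ω | (0:ℝ) < t})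
        ∪ ({ω | (∀ r : ℚ, ((κ ω) (Set.Iic (r:ℝ))).toReal < β) ∨
              (∀ r : ℚ, β ≤ ((κ ω) (Set.Iic (r:ℝ))).toReal)}ᶜ
            ∩ ⋃ r : ℚ, {ω | (r:ℝ) < t ∧ β ≤ ((κ ω) (Set.Iic (r:ℝ))).toReal}) := by
    ext ω
    simp only [Set.mem_preimage, Set.mem_Iio, Set.mem_union, Set.mem_inter_iff, Set.mem_setOf_eq,
      Set.mem_compl_iff, Set.mem_iUnion]
    by_cases hP : (∀ r : ℚ, ((κ ω) (Set.Iic (r:ℝ))).toReal < β) ∨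
        (∀ r : ℚ, β ≤ ((κ ω) (Set.Iic (r:ℝ))).toReal)
    · have h0 : sInf {s : ℝ | β ≤ ((κ ω) (Set.Iic s)).toReal} = 0 := by
        rcases hP with h | h
        · have : {s : ℝ | β ≤ ((κ ω) (Set.Iic s)).toReal} = ∅ := by
            ext s
            simp only [Set.mem_setOf_eq, Set.mem_empty_iff_false, iff_false, not_le]
            obtain ⟨r, hr⟩ := exists_rat_gt s
            exact lt_of_le_of_lt (hFm ω hr.le) (h r)
          rw [this, Real.sInf_empty]
        · have : {s : ℝ | β ≤ ((κ ω) (Set.Iic s)).toReal} = Set.univ := by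
            ext s
            simp only [Set.mem_setOf_eq, Set.mem_univ, iff_true]
            obtain ⟨r, hr⟩ := exists_rat_lt s
            exact le_trans (h r) (hFm ω hr.le)
          rw [this]
          exact Real.sInf_of_not_bddBelow fun ⟨x, hx⟩ =>
            absurd (hx (Set.mem_univ (x - 1))) (by norm_num)
      rw [h0]
      simp [hP]
    · push_neg at hP
      obtain ⟨⟨r₀, hr₀⟩, r₁, hr₁⟩ := hP
      have hne : {s : ℝ | β ≤ ((κ ω) (Set.Iic s)).toReal}.Nonempty := ⟨(r₀ : ℝ), hr₀⟩
      have hbdd : BddBelow {s : ℝ | β ≤ ((κ ω) (Set.Iic s)).toReal} := by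
        refine ⟨(r₁ : ℝ), fun s hs => ?_⟩
        by_contra hlt
        push_neg at hlt
        exact absurd (le_trans hs (hFm ω hlt.le)) (not_le.2 hr₁)
      rw [csInf_lt_iff hbdd hne]
      constructor
      · rintro ⟨s, hs, hst⟩
        obtain ⟨r, hsr, hrt⟩ := exists_rat_btwn hst
        refine Or.inr ⟨?_, r, hrt, le_trans hs (hFm ω hsr.le)⟩
        push_neg
        exact ⟨⟨r₀, hr₀⟩, r₁, hr₁⟩
      · rintro (⟨h, -⟩ | ⟨-, r, hrt, hr⟩)
        · exact absurd hr₀ (not_le.2 ((h.resolve_right (fun h' => absurd (h' r₁) (not_le.2 hr₁))) r₀))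
        · exact ⟨(r : ℝ), hr, hrt⟩
  rw [hEq]
  have hA : MeasurableSet {ω | (∀ r : ℚ, ((κ ω) (Set.Iic (r:ℝ))).toReal < β) ∨
      (∀ r : ℚ, β ≤ ((κ ω) (Set.Iic (r:ℝ))).toReal)} := by
    rw [Set.setOf_or]
    apply MeasurableSet.union
    · rw [Set.setOf_forall]
      exact MeasurableSet.iInter fun r : ℚ => measurableSet_lt (hmeas r) measurable_const
    · rw [Set.setOf_forall]
      exact MeasurableSet.iInter fun r : ℚ => measurableSet_le measurable_const (hmeas r)
  refine (hA.inter (MeasurableSet.const _)).union (hA.compl.inter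
    (MeasurableSet.iUnion fun r => ?_))
  exact (MeasurableSet.const _).inter (measurableSet_le measurable_const (hmeas r))

private lemma measure_Iio_eq_Iic (ν : Measure ℝ) [IsFiniteMeasure ν]
    (hc : Continuous fun t : ℝ => (ν (Set.Iic t)).toReal) (x : ℝ) :
    ν (Set.Iio x) = ν (Set.Iic x) := by
  have hseq : Tendsto (fun n : ℕ => x - 1 / (n + 1 : ℝ)) atTop (𝓝 x) := by
    have h : Tendsto (fun n : ℕ => 1 / ((n : ℝ) + 1)) atTop (𝓝 0) :=
      tendsto_one_div_add_atTop_nhds_zero_nat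
    simpa using tendsto_const_nhds.sub h
  have hmono : Monotone fun n : ℕ => Set.Iic (x - 1 / (n + 1 : ℝ)) := by
    intro n m hnm
    apply Set.Iic_subset_Iic.2
    have h1 : (1 : ℝ) / (m + 1) ≤ 1 / (n + 1) := by
      apply one_div_le_one_div_of_le <;> [positivity; exact_mod_cast by omega]
    linarith
  have hU : ⋃ n : ℕ, Set.Iic (x - 1 / (n + 1 : ℝ)) = Set.Iio x := by
    ext y
    simp only [Set.mem_iUnion, Set.mem_Iic, Set.mem_Iio]
    constructor
    · rintro ⟨n, hn⟩
      have : (0 : ℝ) < 1 / (n + 1) := by positivity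
      linarith
    · intro hy
      obtain ⟨n, hn⟩ := exists_nat_one_div_lt (sub_pos.2 hy)
      exact ⟨n, by linarith⟩
  have h1 := tendsto_measure_iUnion_atTop (μ := ν) hmono
  rw [hU] at h1
  have h2 : Tendsto (fun n : ℕ => ν (Set.Iic (x - 1 / (n + 1 : ℝ)))) atTop
      (𝓝 (ν (Set.Iic x))) := by
    have hc2 : Tendsto (fun n : ℕ => (ν (Set.Iic (x - 1 / (n + 1 : ℝ)))).toReal) atTop
        (𝓝 ((ν (Set.Iic x)).toReal)) := (hc.tendsto x).comp hseq
    have h3 := ENNReal.tendsto_ofReal hc2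
    simpa only [ENNReal.ofReal_toReal (measure_ne_top ν _)] using h3
  exact tendsto_nhds_unique h1 h2

private lemma quantile_exists (ν : Measure ℝ) [IsProbabilityMeasure ν]
    (hc : Continuous fun t : ℝ => (ν (Set.Iic t)).toReal)
    (hsm : StrictMono fun t : ℝ => (ν (Set.Iic t)).toReal)
    {β : ℝ} (hβ0 : 0 < β) (hβ1 : β < 1) :
    (ν (Set.Iic (sInf {s : ℝ | β ≤ (ν (Set.Iic s)).toReal}))).toReal = β := by
  have hbot : Tendsto (fun t : ℝ => (ν (Set.Iic t)).toReal) atBot (𝓝 0) := by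
    have h1 : Tendsto (fun t : ℝ => ν (Set.Iic t)) atBot (𝓝 (ν (⋂ t : ℝ, Set.Iic t))) :=
      tendsto_measure_iInter_atBot (fun t => (measurableSet_Iic).nullMeasurableSet)
        (fun s t hst => Set.Iic_subset_Iic.2 hst) ⟨0, measure_ne_top _ _⟩
    have hI : ⋂ t : ℝ, Set.Iic t = ∅ := by
      ext y
      simp only [Set.mem_iInter, Set.mem_Iic, Set.mem_empty_iff_false, iff_false, not_forall]
      exact ⟨y - 1, by push_neg; linarith⟩
    rw [hI, measure_empty] at h1
    simpa [Function.comp_def] using (ENNReal.tendsto_toReal (by simp)).comp h1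
  have htop : Tendsto (fun t : ℝ => (ν (Set.Iic t)).toReal) atTop (𝓝 1) := by
    have h1 := tendsto_measure_Iic_atTop ν
    rw [measure_univ] at h1
    simpa [Function.comp_def] using (ENNReal.tendsto_toReal (by simp)).comp h1
  have he₁ : (fun _ : ℝ => β) ≤ᶠ[atTop] fun t : ℝ => (ν (Set.Iic t)).toReal :=
    (htop.eventually_const_lt hβ1).mono fun t ht => ht.le
  have he₂ : (fun t : ℝ => (ν (Set.Iic t)).toReal) ≤ᶠ[atBot] fun _ : ℝ => β :=
    (hbot.eventually_lt_const hβ0).mono fun t ht => ht.le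
  obtain ⟨x, hx⟩ := intermediate_value_univ₂_eventually₂ continuous_const hc he₁ he₂
  have hset : {s : ℝ | β ≤ (ν (Set.Iic s)).toReal} = Set.Ici x := by
    ext s
    simp only [Set.mem_setOf_eq, Set.mem_Ici, hx]
    exact hsm.le_iff_le
  rw [hset, csInf_Ici, ← hx]

/-- **Corollary of Propositions 1 and 2.** If `μ` is a probability measure on `Ω` and `κ` a
Markov kernel from `Ω` to `ℝ` such that for `μ`-almost every `ω` the CDF of `κ ω` is continuous
and strictly increasing, then under the composition measure `μ ⊗ₘ κ` the replication statistic
falls outside the central `(1 - α)` predictive interval with probability exactly `α`. -/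
theorem prob_outside_central_interval {Ω : Type*} [MeasurableSpace Ω]
    (μ : Measure Ω) [IsProbabilityMeasure μ]
    (κ : Kernel Ω ℝ) [IsMarkovKernel κ]
    (hCDF : ∀ᵐ ω ∂μ, Continuous (fun t : ℝ => ((κ ω) (Set.Iic t)).toReal) ∧
        StrictMono (fun t : ℝ => ((κ ω) (Set.Iic t)).toReal))
    (α : ℝ) (hα : α ∈ Set.Ioo (0 : ℝ) 1) :
    (μ ⊗ₘ κ) {p : Ω × ℝ |
        p.2 ∉ Set.Ioo (sInf {s : ℝ | α / 2 ≤ ((κ p.1) (Set.Iic s)).toReal})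
          (sInf {s : ℝ | 1 - α / 2 ≤ ((κ p.1) (Set.Iic s)).toReal})}
      = ENNReal.ofReal α := by
  obtain ⟨hα0, hα1⟩ := hα
  set q1 : Ω → ℝ := fun ω => sInf {s : ℝ | α / 2 ≤ ((κ ω) (Set.Iic s)).toReal} with hq1def
  set q2 : Ω → ℝ := fun ω => sInf {s : ℝ | 1 - α / 2 ≤ ((κ ω) (Set.Iic s)).toReal} with hq2def
  have hq1 : Measurable q1 := measurable_quantile κ (α / 2)
  have hq2 : Measurable q2 := measurable_quantile κ (1 - α / 2)
  have hs : MeasurableSet {p : Ω × ℝ | p.2 ∉ Set.Ioo (q1 p.1) (q2 p.1)} := by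
    have : {p : Ω × ℝ | p.2 ∉ Set.Ioo (q1 p.1) (q2 p.1)}
        = {p : Ω × ℝ | p.2 ≤ q1 p.1} ∪ {p : Ω × ℝ | q2 p.1 ≤ p.2} := by
      ext p
      simp only [Set.mem_setOf_eq, Set.mem_union, Set.mem_Ioo, not_and_or, not_lt]
    rw [this]
    exact (measurableSet_le measurable_snd (hq1.comp measurable_fst)).union
      (measurableSet_le (hq2.comp measurable_fst) measurable_snd)
  rw [Measure.compProd_apply hs]
  have hae : ∀ᵐ ω ∂μ,
      (κ ω) (Prod.mk ω ⁻¹' {p : Ω × ℝ | p.2 ∉ Set.Ioo (q1 p.1) (q2 p.1)})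
        = ENNReal.ofReal α := by
    filter_upwards [hCDF] with ω hω
    obtain ⟨hc, hsm⟩ := hω
    have hFa : ((κ ω) (Set.Iic (q1 ω))).toReal = α / 2 :=
      quantile_exists (κ ω) hc hsm (by linarith) (by linarith)
    have hFb : ((κ ω) (Set.Iic (q2 ω))).toReal = 1 - α / 2 :=
      quantile_exists (κ ω) hc hsm (by linarith) (by linarith)
    have hab : q1 ω < q2 ω := by
      have : ((κ ω) (Set.Iic (q1 ω))).toReal < ((κ ω) (Set.Iic (q2 ω))).toReal := by
        rw [hFa, hFb]; linarith
      exact hsm.lt_iff_lt.mp this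
    have hpre : Prod.mk ω ⁻¹' {p : Ω × ℝ | p.2 ∉ Set.Ioo (q1 p.1) (q2 p.1)}
        = Set.Iic (q1 ω) ∪ Set.Ici (q2 ω) := by
      ext t
      simp only [Set.mem_preimage, Set.mem_setOf_eq, Set.mem_union, Set.mem_Ioo, Set.mem_Iic,
        Set.mem_Ici, not_and_or, not_lt]
    rw [hpre, measure_union (Set.Iic_disjoint_Ici.2 (not_le.2 hab)) measurableSet_Ici]
    have h1 : (κ ω) (Set.Iic (q1 ω)) = ENNReal.ofReal (α / 2) := by
      rw [← ENNReal.ofReal_toReal (measure_ne_top _ _), hFa]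
    have h2 : (κ ω) (Set.Ici (q2 ω)) = ENNReal.ofReal (α / 2) := by
      rw [← Set.compl_Iio, measure_compl measurableSet_Iio (measure_ne_top _ _),
        measure_Iio_eq_Iic (κ ω) hc, ← ENNReal.ofReal_toReal (measure_ne_top (κ ω) (Set.Iic (q2 ω))),
        hFb, measure_univ, ← ENNReal.ofReal_one, ← ENNReal.ofReal_sub 1 (by linarith)]
      norm_num
    rw [h1, h2, ← ENNReal.ofReal_add (by linarith) (by linarith)]
    norm_num
  rw [lintegral_congr_ae hae, lintegral_const, measure_univ, mul_one]
end

section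
/- Let ω > 0 and φ > 0, and set γ = φ² / (φ² + ω²). Let B and H be independent real random variables with B distributed as the Gaussian measure on ℝ with mean 0 and variance ω², and H distributed as the Gaussian measure with mean 0 and variance φ². Then the probability that B + H has the same sign as B (i.e., P((B + H) · B > 0)) equals √(2/π) · ∫₀^∞ Φ(√((1 − γ)/γ) · ξ) · e^{−ξ²/2} dξ, where Φ is the cumulative distribution function of the standard normal distribution. (Equation (2): the sign-consistency probability under the directional consistency criterion.) -/
open MeasureTheory ProbabilityTheory Real
open scoped NNReal ENNReal

/-- The CDF `Φ` of the standard normal distribution `N(0,1)`. -/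
noncomputable def stdNormalCDF (x : ℝ) : ℝ :=
  ((gaussianReal 0 1) (Set.Iic x)).toReal

instance gaussianReal_mk_isProbabilityMeasure (m a : ℝ) (h : 0 ≤ a) :
    IsProbabilityMeasure (gaussianReal m ⟨a, h⟩) :=
  let v : ℝ≥0 := ⟨a, h⟩
  (inferInstance : IsProbabilityMeasure (gaussianReal m v))

lemma stdNormalCDF_nonneg (x : ℝ) : 0 ≤ stdNormalCDF x := ENNReal.toReal_nonneg

lemma stdNormalCDF_le_one (x : ℝ) : stdNormalCDF x ≤ 1 := by
  rw [stdNormalCDF]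
  have h := prob_le_one (μ := gaussianReal 0 1) (s := Set.Iic x)
  simpa using ENNReal.toReal_mono (by simp) h

lemma measurable_stdNormalCDF : Measurable stdNormalCDF := by
  have hmono : Monotone stdNormalCDF := fun a b hab =>
    ENNReal.toReal_mono (measure_ne_top _ _) (measure_mono (Set.Iic_subset_Iic.2 hab))
  exact hmono.measurable

lemma gaussianReal_noAtoms {μ : ℝ} {v : ℝ≥0} (hv : v ≠ 0) : NullSingletonClass (gaussianReal μ v) :=
  ⟨fun x => (gaussianReal_absolutelyContinuous μ hv) (measure_singleton x)⟩

lemma gaussianReal_map_neg (v : ℝ≥0) :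
    (gaussianReal 0 v).map (fun x => -x) = gaussianReal 0 v := by
  have h := gaussianReal_map_const_mul (μ := 0) (v := v) (-1)
  have h1 : (⟨(-1 : ℝ) ^ 2, sq_nonneg _⟩ : ℝ≥0) = 1 := by ext; norm_num
  simp only [neg_one_mul, mul_zero, h1, one_mul] at h
  convert h using 2
  ext; simp

lemma gaussianReal_Iic_toReal {σ : ℝ} (hσ : 0 < σ) (x : ℝ) :
    ((gaussianReal 0 ⟨σ ^ 2, sq_nonneg σ⟩) (Set.Iic x)).toReal = stdNormalCDF (x / σ) := by
  have hmap : (gaussianReal 0 1).map (σ * ·) = gaussianReal 0 ⟨σ ^ 2, sq_nonneg σ⟩ := by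
    rw [gaussianReal_map_const_mul]
    congr 1
    · simp
    · ext; simp; rfl
  rw [← hmap, Measure.map_apply (measurable_const_mul σ) measurableSet_Iic,
    Set.preimage_const_mul_Iic₀ _ hσ, stdNormalCDF]

lemma gaussianReal_Iic_eq {σ : ℝ} (hσ : 0 < σ) (y : ℝ) :
    (gaussianReal 0 ⟨σ ^ 2, sq_nonneg σ⟩) (Set.Iic y)
      = ENNReal.ofReal (stdNormalCDF (y / σ)) := by
  rw [← gaussianReal_Iic_toReal hσ y, ENNReal.ofReal_toReal (measure_ne_top _ _)]

lemma gaussianReal_Ioi_eq {σ : ℝ} (hσ : 0 < σ) (y : ℝ) :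
    (gaussianReal 0 ⟨σ ^ 2, sq_nonneg σ⟩) (Set.Ioi y)
      = ENNReal.ofReal (stdNormalCDF (-y / σ)) := by
  have hσ2 : (⟨σ ^ 2, sq_nonneg σ⟩ : ℝ≥0) ≠ 0 := by
    exact fun h => pow_ne_zero 2 hσ.ne' (congrArg NNReal.toReal h)
  haveI := gaussianReal_noAtoms (μ := (0 : ℝ)) hσ2
  conv_lhs => rw [← gaussianReal_map_neg (⟨σ ^ 2, sq_nonneg σ⟩ : ℝ≥0)]
  rw [Measure.map_apply measurable_neg measurableSet_Ioi]
  have hpre : (fun x : ℝ => -x) ⁻¹' Set.Ioi y = Set.Iio (-y) := by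
    ext x; simp [lt_neg]
  rw [hpre, measure_congr Iio_ae_eq_Iic, gaussianReal_Iic_eq hσ]

/-- **Equation (2): sign-consistency probability under the DC criterion.**
If `B ~ N(0, ω²)` and `H ~ N(0, φ²)` are independent and `γ = φ² / (φ² + ω²)`, then
`Pr(sgn(B + H) = sgn B) = √(2/π) ∫₀^∞ Φ(√((1-γ)/γ) ξ) e^{-ξ²/2} dξ`. -/
theorem sign_consistency_probability {α : Type*} [MeasurableSpace α]
    (μ : Measure α) [IsProbabilityMeasure μ]
    (ω φ γ : ℝ) (hω : 0 < ω) (hφ : 0 < φ) (hγ : γ = φ ^ 2 / (φ ^ 2 + ω ^ 2))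
    (B H : α → ℝ) (hB : Measurable B) (hH : Measurable H)
    (hind : IndepFun B H μ)
    (hBlaw : μ.map B = gaussianReal 0 ⟨ω ^ 2, sq_nonneg ω⟩)
    (hHlaw : μ.map H = gaussianReal 0 ⟨φ ^ 2, sq_nonneg φ⟩) :
    (μ {a | 0 < (B a + H a) * B a}).toReal
      = Real.sqrt (2 / π) *
        ∫ ξ in Set.Ioi (0 : ℝ),
          stdNormalCDF (Real.sqrt ((1 - γ) / γ) * ξ) * Real.exp (-ξ ^ 2 / 2) := by
  have hω2 : (⟨ω ^ 2, sq_nonneg ω⟩ : ℝ≥0) ≠ 0 := by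
    exact fun h => pow_ne_zero 2 hω.ne' (congrArg NNReal.toReal h)
  set νB := gaussianReal 0 ⟨ω ^ 2, sq_nonneg ω⟩ with hνB
  set νH := gaussianReal 0 ⟨φ ^ 2, sq_nonneg φ⟩ with hνH
  set S : Set (ℝ × ℝ) := {p : ℝ × ℝ | 0 < (p.1 + p.2) * p.1} with hSdef
  have hS : MeasurableSet S :=
    measurableSet_lt measurable_const ((measurable_fst.add measurable_snd).mul measurable_fst)
  have hmap : μ.map (fun a => (B a, H a)) = νB.prod νH := by
    rw [← hBlaw, ← hHlaw]
    exact (indepFun_iff_map_prod_eq_prod_map_map hB.aemeasurable hH.aemeasurable).1 hind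
  have hA : μ {a | 0 < (B a + H a) * B a} = (νB.prod νH) S := by
    rw [← hmap, Measure.map_apply (hB.prodMk hH) hS]
    rfl
  rw [hA, Measure.prod_apply hS]
  set f : ℝ → ℝ := fun b => stdNormalCDF (|b| / φ) with hf
  have hB0 : ∀ᵐ b ∂νB, b ≠ 0 := by
    rw [ae_iff]
    have : {b : ℝ | ¬ b ≠ 0} = {0} := by ext; simp
    rw [this]
    exact (gaussianReal_absolutelyContinuous 0 hω2) (measure_singleton 0)
  have hae : (fun b => νH (Prod.mk b ⁻¹' S)) =ᵐ[νB] fun b => ENNReal.ofReal (f b) := by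
    filter_upwards [hB0] with b hb
    rcases hb.lt_or_gt with hbneg | hbpos
    · have hset : Prod.mk b ⁻¹' S = Set.Iio (-b) := by
        ext h
        simp only [hSdef, Set.mem_preimage, Set.mem_setOf_eq, Set.mem_Iio]
        constructor <;> intro hh <;> nlinarith
      haveI : NullSingletonClass νH := gaussianReal_noAtoms (μ := (0 : ℝ))
        (fun h => pow_ne_zero 2 hφ.ne' (congrArg NNReal.toReal h))
      rw [hset, measure_congr Iio_ae_eq_Iic, hνH, gaussianReal_Iic_eq hφ]
      show ENNReal.ofReal (stdNormalCDF (-b / φ)) = ENNReal.ofReal (stdNormalCDF (|b| / φ))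
      rw [abs_of_neg hbneg]
    · have hset : Prod.mk b ⁻¹' S = Set.Ioi (-b) := by
        ext h
        simp only [hSdef, Set.mem_preimage, Set.mem_setOf_eq, Set.mem_Ioi]
        constructor <;> intro hh <;> nlinarith
      rw [hset, hνH, gaussianReal_Ioi_eq hφ, neg_neg]
      show ENNReal.ofReal (stdNormalCDF (b / φ)) = ENNReal.ofReal (stdNormalCDF (|b| / φ))
      rw [abs_of_pos hbpos]
  rw [lintegral_congr_ae hae]
  have hfm : Measurable f := measurable_stdNormalCDF.comp (measurable_abs.div_const φ)
  have hfint : Integrable f νB :=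
    ⟨hfm.aestronglyMeasurable,
      HasFiniteIntegral.of_bounded (C := 1) (ae_of_all _ fun b => by
        rw [Real.norm_eq_abs, abs_of_nonneg (stdNormalCDF_nonneg _)]
        exact stdNormalCDF_le_one _)⟩
  rw [← ofReal_integral_eq_lintegral_ofReal hfint (ae_of_all _ fun b => stdNormalCDF_nonneg _),
    ENNReal.toReal_ofReal (integral_nonneg fun b => stdNormalCDF_nonneg _)]
  -- pass to the Lebesgue integral with the gaussian density
  have hdens : νB = volume.withDensity
      (fun x => ((gaussianPDFReal 0 ⟨ω ^ 2, sq_nonneg ω⟩ x).toNNReal : ℝ≥0∞)) := by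
    rw [hνB, gaussianReal_of_var_ne_zero 0 hω2]
    rfl
  rw [hdens, integral_withDensity_eq_integral_smul
    (measurable_gaussianPDFReal 0 ⟨ω ^ 2, sq_nonneg ω⟩).real_toNNReal f]
  set F : ℝ → ℝ := fun x => gaussianPDFReal 0 ⟨ω ^ 2, sq_nonneg ω⟩ x * stdNormalCDF (x / φ)
    with hF
  have hsmul : (fun b : ℝ => (gaussianPDFReal 0 ⟨ω ^ 2, sq_nonneg ω⟩ b).toNNReal • f b)
      = fun b => F |b| := by
    funext b
    rw [NNReal.smul_def, Real.coe_toNNReal _ (gaussianPDFReal_nonneg 0 ⟨ω ^ 2, sq_nonneg ω⟩ b)]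
    show gaussianPDFReal 0 ⟨ω ^ 2, sq_nonneg ω⟩ b * stdNormalCDF (|b| / φ)
      = gaussianPDFReal 0 ⟨ω ^ 2, sq_nonneg ω⟩ |b| * stdNormalCDF (|b| / φ)
    congr 1
    simp only [gaussianPDFReal, sub_zero, sq_abs]
  rw [hsmul, integral_comp_abs (f := F)]
  have hcv := integral_comp_mul_left_Ioi F 0 hω
  rw [mul_zero] at hcv
  have h7 : ∫ x in Set.Ioi (0 : ℝ), F x = ω * ∫ x in Set.Ioi (0 : ℝ), F (ω * x) := by
    rw [hcv, smul_eq_mul, ← mul_assoc, mul_inv_cancel₀ hω.ne', one_mul]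
  rw [h7]
  have hγ' : Real.sqrt ((1 - γ) / γ) = ω / φ := by
    have h1 : (1 - γ) / γ = (ω / φ) ^ 2 := by
      rw [hγ]
      field_simp
      ring
    rw [h1, Real.sqrt_sq (by positivity)]
  have hintegrand : ∀ ξ : ℝ, F (ω * ξ)
      = (Real.sqrt (2 * π) * ω)⁻¹ *
        (stdNormalCDF (Real.sqrt ((1 - γ) / γ) * ξ) * Real.exp (-ξ ^ 2 / 2)) := by
    intro ξ
    rw [hF]
    show gaussianPDFReal 0 ⟨ω ^ 2, sq_nonneg ω⟩ (ω * ξ) * stdNormalCDF (ω * ξ / φ) = _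
    rw [hγ']
    simp only [gaussianPDFReal, sub_zero, NNReal.coe_mk]
    show (√(2 * π * ω ^ 2))⁻¹ * rexp (-(ω * ξ) ^ 2 / (2 * ω ^ 2)) * stdNormalCDF (ω * ξ / φ) = _
    have h2 : Real.sqrt (2 * π * ω ^ 2) = Real.sqrt (2 * π) * ω := by
      rw [Real.sqrt_mul (by positivity), Real.sqrt_sq hω.le]
    have h3 : -(ω * ξ) ^ 2 / (2 * ω ^ 2) = -ξ ^ 2 / 2 := by
      field_simp
    rw [h2, h3]
    have h4 : ω * ξ / φ = ω / φ * ξ := by ring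
    rw [h4]; ring
  simp only [hintegrand]
  rw [integral_const_mul]
  have h5 : Real.sqrt (2 / π) = 2 / Real.sqrt (2 * π) := by
    rw [show (2 : ℝ) / π = 2 ^ 2 / (2 * π) by ring,
      Real.sqrt_div (by positivity) _, Real.sqrt_sq (by norm_num)]
  rw [h5]
  have hne : Real.sqrt (2 * π) ≠ 0 := by positivity
  field_simp
end
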